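/- Let p be an odd prime (or p = 2 with k ≥ 2), 1 ≤ k ≤ ν, and let the cyclic group Ω_p^{k,ν} = ker((ℤ/p^νℤ)ˣ → (ℤ/p^kℤ)ˣ) act on ℤ/p^νℤ by multiplication. Then the first group cohomology H¹(Ω_p^{k,ν}, ℤ/p^νℤ) vanishes. -/

import Mathlib

open groupCohomology

/-- The representation of a subgroup `H` of `(ZMod n)ˣ` on `ZMod n` by multiplication. -/
noncomputable def mulRep (n : ℕ) (H : Subgroup (ZMod n)ˣ) : Representation ℤ H (ZMod n) :=
  ((Algebra.lmul ℤ (ZMod n)).toRingHom.toMonoidHom).comp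
    ((Units.coeHom (ZMod n)).comp H.subtype)

lemma step_arith (p : ℕ) (hp : p.Prime) (j : ℕ) (hj : 1 ≤ j) (hj2 : p = 2 → 2 ≤ j)
    (u : ℤ) (hu : ¬ (p:ℤ) ∣ u) :
    ∃ u' : ℤ, ¬ (p:ℤ) ∣ u' ∧ (1 + (p:ℤ)^j * u)^p = 1 + (p:ℤ)^(j+1) * u' := by
  obtain ⟨q, rfl⟩ : ∃ q, p = q + 2 := ⟨p - 2, by have := hp.two_le; omega⟩
  set p := q + 2 with hpdef
  set x : ℤ := (p:ℤ)^j * u with hx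
  have hR : ((p:ℤ)^(j+2)) ∣ (x + 1)^p - (1 + p * x) := by
    rw [add_pow]
    have hsum : ∑ i ∈ Finset.range (p + 1), x ^ i * 1 ^ (p - i) * (p.choose i : ℤ)
        = (∑ i ∈ Finset.range q.succ, x ^ (i+2) * 1 ^ (p - (i+2)) * (p.choose (i+2) : ℤ))
          + x ^ 1 * 1 ^ (p-1) * (p.choose 1 : ℤ)
          + x ^ 0 * 1 ^ p * (p.choose 0 : ℤ) := by
      rw [Finset.sum_range_succ' _ (p), Finset.sum_range_succ' _ (q+1)]
      norm_num
    rw [hsum]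
    have h1 : x ^ 1 * 1 ^ (p-1) * (p.choose 1 : ℤ) = (p:ℤ) * x := by
      simp [Nat.choose_one_right]; ring
    have h0 : x ^ 0 * (1:ℤ) ^ p * (p.choose 0 : ℤ) = 1 := by simp
    rw [h1, h0]
    have : (∑ i ∈ Finset.range q.succ, x ^ (i+2) * 1 ^ (p - (i+2)) * (p.choose (i+2) : ℤ))
        + (p:ℤ) * x + 1 - (1 + (p:ℤ) * x)
        = ∑ i ∈ Finset.range q.succ, x ^ (i+2) * 1 ^ (p - (i+2)) * (p.choose (i+2) : ℤ) := by
      ring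
    rw [this]
    refine Finset.dvd_sum fun i hi => ?_
    simp only [one_pow, mul_one]
    have hxpow : ∀ r : ℕ, x ^ r = (p:ℤ)^(j*r) * u ^ r := by
      intro r; rw [hx, mul_pow, ← pow_mul]
    rcases eq_or_lt_of_le (Nat.lt_succ_iff.mp (Finset.mem_range.mp hi)) with he | hlt
    · -- i = q, i+2 = p
      rw [he, hxpow]
      have hchoose : (p.choose (q+2) : ℤ) = 1 := by
        rw [hpdef]; norm_num
      rw [hchoose, mul_one]
      refine pow_dvd_pow _ ?_ |>.trans (Dvd.intro _ rfl)
      have : 2 ≤ j ∨ 1 ≤ q := by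
        rcases Nat.eq_or_lt_of_le (by omega : (2:ℕ) ≤ p) with h | h
        · exact Or.inl (hj2 h.symm)
        · omega
      rcases this with h | h <;> nlinarith [hj, Nat.zero_le q]
    · -- i + 2 < p
      have hch : (p:ℤ) ∣ (p.choose (i+2) : ℤ) := by
        exact_mod_cast Int.natCast_dvd_natCast.mpr (hp.dvd_choose_self (by omega) (by omega))
      have hxd : ((p:ℤ))^(j+1) ∣ x ^ (i+2) := by
        rw [hxpow]
        exact ((pow_dvd_pow _ (by nlinarith)).trans (Dvd.intro _ rfl))
      calc ((p:ℤ))^(j+2) = (p:ℤ)^(j+1) * p := by ring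
      _ ∣ x ^ (i+2) * (p.choose (i+2) : ℤ) := mul_dvd_mul hxd hch
  obtain ⟨c, hc⟩ := hR
  refine ⟨u + p * c, fun h => hu (by simpa using h.sub (Dvd.intro c rfl)), ?_⟩
  have : (1 + (p:ℤ)^j * u)^p = (1 + p * x) + (p:ℤ)^(j+2) * c := by
    rw [← hc, hx]; ring_nf
  rw [this, hx]; ring

lemma key_arith (p : ℕ) (hp : p.Prime) (k : ℕ) (hk : 1 ≤ k) (hk2 : p = 2 → 2 ≤ k) (m : ℕ) :
    ∃ u : ℤ, ¬ (p:ℤ) ∣ u ∧ (1 + (p:ℤ)^k)^(p^m) = 1 + (p:ℤ)^(k+m) * u := by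
  induction m with
  | zero => exact ⟨1, by intro h; have h2 := Int.le_of_dvd one_pos h; have := hp.two_le; omega, by simp⟩
  | succ m ih =>
      obtain ⟨u, hu, hpow⟩ := ih
      obtain ⟨u', hu', h'⟩ := step_arith p hp (k+m) (by omega) (fun h => by have := hk2 h; omega) u hu
      exact ⟨u', hu', by rw [pow_succ, pow_mul, hpow, h']; ring_nf⟩

theorem stmt_2 (p : ℕ) (hp : p.Prime) (k ν : ℕ) (hk : 1 ≤ k) (hkν : k ≤ ν)
    (h2 : Odd p ∨ (p = 2 ∧ 2 ≤ k)) :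
    Subsingleton (groupCohomology.H1
      (Rep.of (mulRep (p ^ ν) (ZMod.unitsMap (pow_dvd_pow p hkν)).ker))) := by
  have hk2 : p = 2 → 2 ≤ k := by
    rintro rfl
    rcases h2 with h | h
    · exact absurd h (by decide)
    · exact h.2
  haveI : NeZero (p ^ ν) := ⟨pow_ne_zero _ hp.ne_zero⟩
  haveI : NeZero (p ^ k) := ⟨pow_ne_zero _ hp.ne_zero⟩
  set n : ℕ := p ^ ν with hn
  set G : Subgroup (ZMod n)ˣ := (ZMod.unitsMap (pow_dvd_pow p hkν)).ker with hG
  set A : Rep ℤ G := Rep.of (mulRep n G) with hA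
  set N : ℕ := p ^ (ν - k) with hN
  have hNpos : 0 < N := pow_pos hp.pos _
  have hpZne : ((p:ℤ)) ≠ 0 := by exact_mod_cast hp.ne_zero
  -- the distinguished element x = 1 + p^k
  set x : ZMod n := ((1 + (p:ℤ)^k : ℤ) : ZMod n) with hx
  have hpν0 : (((p:ℤ)^ν : ℤ) : ZMod n) = 0 := by
    rw [show ((p:ℤ)^ν) = ((p^ν : ℕ) : ℤ) by push_cast; ring, Int.cast_natCast, hn,
      ZMod.natCast_self]
  -- x^N = 1
  obtain ⟨u, hu, hueq⟩ := key_arith p hp k hk hk2 (ν - k)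
  have hkν' : k + (ν - k) = ν := by omega
  have hueq' : (1 + (p:ℤ)^k) ^ N = 1 + (p:ℤ)^ν * u := by rw [hN, hueq, hkν']
  have hxN : x ^ N = 1 := by
    rw [hx, ← Int.cast_pow, hueq']
    push_cast [hpν0]
    ring
  have hxmul : x * x ^ (N - 1) = 1 := by
    rw [← pow_succ', Nat.sub_add_cancel hNpos, hxN]
  set u0 : (ZMod n)ˣ := ⟨x, x ^ (N-1), hxmul, by rw [mul_comm]; exact hxmul⟩ with hu0
  have hmem : u0 ∈ G := by
    have hcast : (ZMod.castHom (pow_dvd_pow p hkν) (ZMod (p^k))) x = 1 := by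
      rw [hx, map_intCast]
      have : (((p:ℤ)^k : ℤ) : ZMod (p^k)) = 0 := by
        rw [show ((p:ℤ)^k) = ((p^k : ℕ) : ℤ) by push_cast; ring, Int.cast_natCast,
          ZMod.natCast_self]
      push_cast at this ⊢
      rw [this]; ring
    refine MonoidHom.mem_ker.mpr (Units.ext ?_)
    simpa [ZMod.unitsMap_def] using hcast
  set v : G := ⟨u0, hmem⟩ with hv
  have hvcoe : (((v : (ZMod n)ˣ)) : ZMod n) = x := rfl
  have hvN : v ^ N = 1 := by
    apply Subtype.ext; apply Units.ext; exact hxN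
  -- order of v is N
  have horder : orderOf v = N := by
    have h1 : orderOf v ∣ N := orderOf_dvd_of_pow_eq_one hvN
    obtain ⟨j, hjle, hj⟩ := (Nat.dvd_prime_pow hp).1 (hN ▸ h1)
    rcases eq_or_lt_of_le hjle with heq | hlt
    · rw [hj, heq, hN]
    · exfalso
      have hdvd : orderOf v ∣ p ^ (ν - k - 1) := hj ▸ pow_dvd_pow p (by omega)
      have hone : v ^ (p ^ (ν - k - 1)) = 1 := orderOf_dvd_iff_pow_eq_one.mp hdvd
      have hxone : x ^ (p ^ (ν - k - 1)) = 1 := by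
        have := congrArg (fun σ : G => ((σ : (ZMod n)ˣ) : ZMod n)) hone
        simpa [hvcoe] using this
      obtain ⟨u', hu', hueq2⟩ := key_arith p hp k hk hk2 (ν - k - 1)
      have hk1 : k + (ν - k - 1) = ν - 1 := by omega
      have hzero : (((p:ℤ)^(ν-1) * u' : ℤ) : ZMod n) = 0 := by
        have : ((1 + (p:ℤ)^(ν-1) * u' : ℤ) : ZMod n) = 1 := by
          rw [← hk1, ← hueq2, Int.cast_pow, ← hx]; exact hxone
        push_cast at this ⊢
        linear_combination this
      have hd := (ZMod.intCast_zmod_eq_zero_iff_dvd _ n).mp hzero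
      rw [hn] at hd
      push_cast at hd
      have hsplit : (p:ℤ)^ν = (p:ℤ)^(ν-1) * p := by
        rw [← pow_succ]; congr 1; omega
      rw [hsplit] at hd
      obtain ⟨c, hc⟩ := hd
      apply hu'
      refine ⟨c, mul_left_cancel₀ (pow_ne_zero (ν-1) hpZne) ?_⟩
      linear_combination hc
  -- the cardinality of G is N
  have hsurj := ZMod.unitsMap_surjective (n := p^k) (pow_dvd_pow p hkν)
  have hcard : Nat.card G = N := by
    have h1 : Nat.card (ZMod n)ˣ = Nat.card ((ZMod n)ˣ ⧸ G) * Nat.card G :=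
      Subgroup.card_eq_card_quotient_mul_card_subgroup G
    have h2 : Nat.card ((ZMod n)ˣ ⧸ G) = Nat.card (ZMod (p^k))ˣ :=
      Nat.card_congr (QuotientGroup.quotientKerEquivOfSurjective _ hsurj).toEquiv
    have h3 : Nat.card (ZMod n)ˣ = n.totient := by
      rw [Nat.card_eq_fintype_card, ZMod.card_units_eq_totient]
    have h4 : Nat.card (ZMod (p^k))ˣ = (p^k).totient := by
      rw [Nat.card_eq_fintype_card, ZMod.card_units_eq_totient]
    have h5 : n.totient = N * (p^k).totient := by
      rw [hn, hN, Nat.totient_prime_pow hp (by omega : 0 < ν),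
        Nat.totient_prime_pow hp (by omega : 0 < k),
        show ν - 1 = (ν - k) + (k - 1) by omega, pow_add]
      ring
    have hpos : 0 < (p^k).totient := Nat.totient_pos.mpr (pow_pos hp.pos k)
    have h6 : N * (p^k).totient = Nat.card ((ZMod n)ˣ ⧸ G) * Nat.card G := by
      rw [← h5, ← h3, h1]
    rw [h2, h4] at h6
    refine Nat.eq_of_mul_eq_mul_left hpos ?_
    rw [← h6]; ring
  have htop : Subgroup.zpowers v = ⊤ :=
    Subgroup.eq_top_of_card_eq _ (by rw [Nat.card_zpowers, horder, hcard])
  have hgen : ∀ σ : G, ∃ i : ℕ, σ = v ^ i := by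
    intro σ
    have hz : σ ∈ Subgroup.zpowers v := htop ▸ Subgroup.mem_top σ
    obtain ⟨i, hi⟩ := (Submonoid.mem_powers_iff _ _).mp (mem_powers_iff_mem_zpowers.mpr hz)
    exact ⟨i, hi.symm⟩
  -- now the cocycle argument
  refine subsingleton_of_forall_eq 0 fun a => H1_induction_on (C := fun a => a = 0) a fun f =>
    (H1π_eq_zero_iff f).mpr (LinearMap.mem_range.mpr ((show (∃ x, ∀ g, A.ρ g x - x = f g) → _ from
      fun ⟨x, hx⟩ => ⟨x, funext fun g => by rw [d₀₁_hom_apply]; exact hx g⟩) ?_))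
  have hρ : ∀ (σ : G) (y : ZMod n), A.ρ σ y = ((σ : (ZMod n)ˣ) : ZMod n) * y :=
    fun σ y => rfl
  have hcoc := (mem_cocycles₁_iff (A := A) (f : G → A)).1 f.2
  let F : G → ZMod n := ⇑f
  have hcoc' : ∀ g h : G, F (g * h) = ((g : (ZMod n)ˣ) : ZMod n) * F h + F g :=
    fun g h => hcoc g h
  have hFone : F 1 = 0 := cocycles₁_map_one f
  have hfv : ∀ i : ℕ, F (v ^ i) = (∑ j ∈ Finset.range i, x ^ j) * F v := by
    intro i
    induction i with
    | zero => simpa using hFone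
    | succ i ih =>
        rw [pow_succ' v i, hcoc' v (v ^ i), hvcoe, ih, geom_sum_succ]
        ring
  have hrel : (∑ j ∈ Finset.range N, x ^ j) * F v = 0 := by
    rw [← hfv N, hvN]
    exact hFone
  have hfveq : (((F v).val : ℤ) : ZMod n) = F v := by
    push_cast
    exact ZMod.natCast_rightInverse _
  obtain ⟨t, ht⟩ : ((p:ℤ)^k) ∣ ((F v).val : ℤ) := by
    have hSZ : (∑ j ∈ Finset.range N, (1 + (p:ℤ)^k) ^ j) = (p:ℤ)^(ν-k) * u := by
      have hgm := geom_sum_mul (1 + (p:ℤ)^k) N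
      refine mul_right_cancel₀ (pow_ne_zero k hpZne) ?_
      have he : (1 + (p:ℤ)^k - 1) = (p:ℤ)^k := by ring
      rw [he] at hgm
      rw [hgm, hueq', show (p:ℤ)^(ν-k) * u * (p:ℤ)^k = (p:ℤ)^(ν-k+k) * u by
        rw [pow_add]; ring, show ν - k + k = ν by omega]
      ring
    have hcast : (∑ j ∈ Finset.range N, x ^ j) = (((p:ℤ)^(ν-k) * u : ℤ) : ZMod n) := by
      rw [← hSZ, hx]
      push_cast
      ring
    have h0 : ((((p:ℤ)^(ν-k) * u * ((F v).val : ℤ) : ℤ)) : ZMod n) = 0 := by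
      rw [Int.cast_mul, hfveq, ← hcast]
      exact hrel
    have hd := (ZMod.intCast_zmod_eq_zero_iff_dvd _ n).mp h0
    have hnν : ((p:ℤ))^ν = ((n:ℕ):ℤ) := by rw [hn]; push_cast; ring
    have hd2 : ((p:ℤ))^ν ∣ (p:ℤ)^(ν-k) * u * ((F v).val : ℤ) := by rw [hnν]; exact hd
    have hsplit : (p:ℤ)^ν = (p:ℤ)^(ν-k) * (p:ℤ)^k := by rw [← pow_add]; congr 1; omega
    rw [hsplit] at hd2
    obtain ⟨c, hc⟩ := hd2
    have hpk : (p:ℤ)^k ∣ u * ((F v).val : ℤ) := by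
      refine ⟨c, mul_left_cancel₀ (pow_ne_zero (ν-k) hpZne) ?_⟩
      linear_combination hc
    have hcop : IsCoprime ((p:ℤ)^k) u :=
      ((Prime.coprime_iff_not_dvd (Nat.prime_iff_prime_int.mp hp)).mpr hu).pow_left
    exact hcop.dvd_of_dvd_mul_left hpk
  refine ⟨((t : ℤ) : ZMod n), fun σ => ?_⟩
  obtain ⟨i, rfl⟩ := hgen σ
  have hfvval : F v = (x - 1) * ((t : ℤ) : ZMod n) := by
    rw [← hfveq, ht, hx]
    push_cast
    ring
  have hvi : (((v ^ i : G) : (ZMod n)ˣ) : ZMod n) = x ^ i := by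
    rw [← hvcoe]; norm_cast
  have hgs := geom_sum_mul x i
  show ((((v ^ i : G) : (ZMod n)ˣ)) : ZMod n) * ((t : ℤ) : ZMod n) - ((t : ℤ) : ZMod n)
      = F (v ^ i)
  rw [hvi, hfv i, hfvval]
  linear_combination (-((t : ℤ) : ZMod n)) * hgs
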